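/- (Proposition 3 of the paper: Riemannian gradient descent is the same in both models — the exponential maps commute with the isometry.) Let E = EuclideanSpace ℝ (Fin n), let x ∈ E with ‖x‖ < 1, and let v ∈ E with v ≠ 0. Set λ := 2/(1 - ‖x‖²), N := λ * ‖v‖, y := φ(x) = (y₀, yᵣ), and w := Dφ_y(v). Then ψ(Real.cosh N • y + (Real.sinh N / N) • w) = x ⊕ ((Real.tanh (N/2)/‖v‖) • v). (The left side is ψ applied to the Lorentz exponential map exp_y of the tangent vector Dφ_y(v), whose Lorentz norm is N = λ‖v‖; the right side is the Poincaré exponential map exp_x(v). Applying this with v = −η·∇_{𝔻ⁿ}f(x) gives ψ(exp_y(−η∇_{𝕃ⁿ}g(y))) = exp_x(−η∇_{𝔻ⁿ}f(x)).) -/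

import Mathlib

open RealInnerProductSpace

/-- The transition map from the Poincaré ball to the Lorentz model. -/
noncomputable def phi {n : ℕ} (x : EuclideanSpace ℝ (Fin n)) : ℝ × EuclideanSpace ℝ (Fin n) :=
  ((1 + ‖x‖ ^ 2) / (1 - ‖x‖ ^ 2), (2 / (1 - ‖x‖ ^ 2)) • x)

/-- The transition map from the Lorentz model to the Poincaré ball. -/
noncomputable def psi {n : ℕ} (y : ℝ × EuclideanSpace ℝ (Fin n)) : EuclideanSpace ℝ (Fin n) :=
  (1 / (1 + y.1)) • y.2

/-- The differential at `y = φ(x)` of the transition map `φ` from the Poincaré ball to the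
Lorentz model, applied to a tangent vector `v`. -/
noncomputable def Dphi {n : ℕ} (y : ℝ × EuclideanSpace ℝ (Fin n))
    (v : EuclideanSpace ℝ (Fin n)) : ℝ × EuclideanSpace ℝ (Fin n) :=
  (⟪y.2, v⟫ * (1 + y.1), (1 + y.1) • v + ⟪y.2, v⟫ • y.2)

/-- Möbius addition on the unit ball. -/
noncomputable def mobius {n : ℕ} (x u : EuclideanSpace ℝ (Fin n)) : EuclideanSpace ℝ (Fin n) :=
  (1 / (1 + 2 * ⟪x, u⟫ + ‖x‖ ^ 2 * ‖u‖ ^ 2)) •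
    ((1 + 2 * ⟪x, u⟫ + ‖u‖ ^ 2) • x + (1 - ‖x‖ ^ 2) • u)

set_option maxHeartbeats 1000000 in
/-- Proposition 3: the Lorentz and Poincaré exponential maps commute with the isometry `ψ`. -/
theorem exp_maps_commute (n : ℕ) (x v : EuclideanSpace ℝ (Fin n)) (hx : ‖x‖ < 1) (hv : v ≠ 0) :
    psi (Real.cosh (2 / (1 - ‖x‖ ^ 2) * ‖v‖) • phi x +
        (Real.sinh (2 / (1 - ‖x‖ ^ 2) * ‖v‖) / (2 / (1 - ‖x‖ ^ 2) * ‖v‖)) • Dphi (phi x) v) =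
      mobius x ((Real.tanh (2 / (1 - ‖x‖ ^ 2) * ‖v‖ / 2) / ‖v‖) • v) := by
  have hr : (0:ℝ) < ‖v‖ := norm_pos_iff.mpr hv
  have hxn : (0:ℝ) ≤ ‖x‖ := norm_nonneg x
  have h1a : (0:ℝ) < 1 - ‖x‖ ^ 2 := by nlinarith
  set r := ‖v‖ with hrdef
  set a := ‖x‖ ^ 2 with hadef
  set N := 2 / (1 - a) * r with hNdef
  have hNpos : 0 < N := by
    have : (0:ℝ) < 2 / (1 - a) := by positivity
    exact mul_pos this hr
  set t := Real.tanh (N / 2) with htdef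
  have hcpos : 0 < Real.cosh (N / 2) := Real.cosh_pos _
  have hspos : 0 < Real.sinh (N / 2) := Real.sinh_pos_iff.mpr (by linarith)
  have hcs : Real.cosh (N / 2) ^ 2 - Real.sinh (N / 2) ^ 2 = 1 := Real.cosh_sq_sub_sinh_sq _
  have hteq : t = Real.sinh (N / 2) / Real.cosh (N / 2) := Real.tanh_eq_sinh_div_cosh _
  have ht0 : 0 < t := by rw [hteq]; positivity
  have ht1 : t < 1 := by
    rw [hteq, div_lt_one hcpos]
    nlinarith [Real.cosh_sub_sinh (N / 2), Real.exp_pos (-(N / 2))]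
  have h1t2 : (0:ℝ) < 1 - t ^ 2 := by nlinarith
  have hcosh : Real.cosh N = (1 + t ^ 2) / (1 - t ^ 2) := by
    have h2 := Real.cosh_two_mul (N / 2)
    rw [show 2 * (N / 2) = N by ring] at h2
    rw [h2, hteq]
    field_simp
    linarith [hcs]
  have hsinh : Real.sinh N = 2 * t / (1 - t ^ 2) := by
    have h2 := Real.sinh_two_mul (N / 2)
    rw [show 2 * (N / 2) = N by ring] at h2
    rw [h2, hteq]
    field_simp
    nlinarith [hcs]
  
  set ip := ⟪x, v⟫ with hipdef
  have hipbd : |ip| ≤ ‖x‖ * r := abs_real_inner_le_norm x v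
  have hipl : -(‖x‖ * r) ≤ ip := (abs_le.mp hipbd).1
  have htx : t * ‖x‖ < 1 := by nlinarith
  have hD : (0:ℝ) < 1 + 2 * (t * ip / r) + a * t ^ 2 := by
    have h1 : 1 + 2 * (t * ip / r) + a * t ^ 2 =
        ((1 - t * ‖x‖) ^ 2 * r + 2 * t * (ip + ‖x‖ * r)) / r := by
      rw [hadef]; field_simp; ring
    rw [h1]
    apply div_pos _ hr
    have e1 : (0:ℝ) < (1 - t * ‖x‖) ^ 2 * r := mul_pos (pow_pos (by linarith) 2) hr
    have e2 : (0:ℝ) ≤ 2 * t * (ip + ‖x‖ * r) :=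
      mul_nonneg (by linarith) (by linarith)
    linarith
  have hnu : ‖(t / r) • v‖ = t := by
    rw [norm_smul, Real.norm_eq_abs, abs_of_pos (by positivity), ← hrdef]
    field_simp
  have hiu : ⟪x, (t / r) • v⟫ = t / r * ip := real_inner_smul_right x v (t / r)
  simp only [psi, phi, Dphi, mobius, ← hadef, ← hrdef, ← hNdef, ← htdef, ← hipdef,
    hnu, hiu, Prod.smul_fst, Prod.smul_snd, Prod.fst_add, Prod.snd_add, smul_eq_mul,
    real_inner_smul_left, hcosh, hsinh]
  rw [hNdef]
  have hDm : (0:ℝ) < 1 + 2 * (t / r * ip) + a * t ^ 2 := by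
    have h2 : 1 + 2 * (t / r * ip) + a * t ^ 2 = 1 + 2 * (t * ip / r) + a * t ^ 2 := by ring
    rw [h2]; exact hD
  have hKey : 1 / (1 + ((1 + t ^ 2) / (1 - t ^ 2) * ((1 + a) / (1 - a)) +
      2 * t / (1 - t ^ 2) / (2 / (1 - a) * r) * (2 / (1 - a) * ip * (1 + (1 + a) / (1 - a))))) =
      (1 - t ^ 2) * (1 - a) / (2 * (1 + 2 * (t / r * ip) + a * t ^ 2)) := by
    rw [show 1 + ((1 + t ^ 2) / (1 - t ^ 2) * ((1 + a) / (1 - a)) +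
        2 * t / (1 - t ^ 2) / (2 / (1 - a) * r) * (2 / (1 - a) * ip * (1 + (1 + a) / (1 - a)))) =
        2 * (1 + 2 * (t / r * ip) + a * t ^ 2) / ((1 - t ^ 2) * (1 - a)) by
      field_simp
      ring]
    rw [one_div_div]
  rw [hKey]
  clear hKey hnu hiu hipbd hipl hD hNpos hcosh hsinh hteq hcs hcpos hspos hNdef htdef hadef hrdef hipdef htx
  clear_value t a r ip N
  clear N hx hv hxn
  have e2 : (1:ℝ) - t ^ 2 ≠ 0 := h1t2.ne'
  have e3 : (1:ℝ) - a ≠ 0 := h1a.ne'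
  have e4 : r ≠ 0 := hr.ne'
  have hDr : (0:ℝ) < r + 2 * (t * ip) + a * t ^ 2 * r := by
    have h := mul_pos hr hDm
    have h2 : r * (1 + 2 * (t / r * ip) + a * t ^ 2) = r + 2 * (t * ip) + a * t ^ 2 * r := by
      field_simp
    linarith [h2 ▸ h]
  have h6 : r + 2 * (t * ip) + a * t ^ 2 * r ≠ 0 := hDr.ne'
  have e5 : 1 + 2 * (t / r * ip) + a * t ^ 2 ≠ 0 := hDm.ne'
  match_scalars <;>
  · field_simp
    ring
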